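/- Let α = [0;2,\overline{r}] with r ≥ 1, let σ be the standard morphism σ(a) = s₁, σ(b) = s₁^{r−1}s₀ which generates c_α, and let (qₙ) be the denominators of the convergents of α. For all k, m ∈ ℕ with k = q_{m+1} − p where 2 ≤ p ≤ q_{m+1} − q_m + 1, the k-th right conjugate of σ^m satisfies (σ^m)_k(c_α) = ∏_{j=m−1}^{∞} (σ^{j+1})_{q_{m+1}−q_m−p}(b), where by convention (σ^{j+1})_{−1}(b) denotes the adjoining singular word v_j. -/
import Mathlib


/-- The two-letter alphabet 𝒜 = {a, b}. -/
inductive AB : Type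
  | a : AB
  | b : AB
deriving DecidableEq, Repr

/-- Apply a morphism (determined by its images on the letters) to a finite word. -/
def applyM (g : AB → List AB) (w : List AB) : List AB := w.flatMap g

/-- The exchange morphism E : a ↦ b, b ↦ a. -/
def Em : AB → List AB
  | AB.a => [AB.b]
  | AB.b => [AB.a]

/-- The morphism φ : a ↦ ab, b ↦ a. -/
def phim : AB → List AB
  | AB.a => [AB.a, AB.b]
  | AB.b => [AB.a]

/-- Composition of morphisms: `compM g h` applies `h` first, then `g`. -/
def compM (g h : AB → List AB) : AB → List AB := fun c => applyM g (h c)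

/-- Powers of a morphism. -/
def mpow (g : AB → List AB) : ℕ → AB → List AB
  | 0 => fun c => [c]
  | n + 1 => compM g (mpow g n)

/-- A morphism is standard iff it is a composition of E and φ (in any number and order). -/
inductive IsStandard : (AB → List AB) → Prop
  | id : IsStandard (fun c => [c])
  | compE {ψ : AB → List AB} : IsStandard ψ → IsStandard (compM ψ Em)
  | compPhi {ψ : AB → List AB} : IsStandard ψ → IsStandard (compM ψ phim)

/-- `IsRightConj ψ ξ k` : ξ is the k-th right conjugate of ψ, i.e. there is a word u
of length k with ψ(w)u = uξ(w) for all finite words w. -/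
def IsRightConj (ψ ξ : AB → List AB) (k : ℕ) : Prop :=
  ∃ u : List AB, u.length = k ∧ ∀ w : List AB, applyM ψ w ++ u = u ++ applyM ξ w

/-- w^k (power of a finite word under concatenation). -/
def lpow (w : List AB) : ℕ → List AB
  | 0 => []
  | k + 1 => w ++ lpow w k

/-- Standard sequence associated with a directive sequence (d₁, d₂, …) (here `d`
is indexed so that `d i` is dᵢ for i ≥ 1): `sseq d 0 = s₋₁ = b`, `sseq d (n+1) = sₙ`,
with s₀ = a and sₙ = sₙ₋₁^{dₙ} sₙ₋₂. -/
def sseq (d : ℕ → ℕ) : ℕ → List AB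
  | 0 => [AB.b]
  | 1 => [AB.a]
  | n + 2 => lpow (sseq d (n + 1)) (d (n + 1)) ++ sseq d n

/-- Convergent denominators: `qseq d n` = qₙ = |sₙ| (q₀ = 1, q₁ = 1 + d₁,
qₙ = dₙqₙ₋₁ + qₙ₋₂). -/
def qseq (d : ℕ → ℕ) : ℕ → ℕ
  | 0 => 1
  | 1 => 1 + d 1
  | n + 2 => d (n + 2) * qseq d (n + 1) + qseq d n

/-- `PrefInf u x` : the finite word u is a prefix of the infinite word x. -/
def PrefInf (u : List AB) (x : ℕ → AB) : Prop :=
  ∀ i, i < u.length → u.getD i AB.a = x i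

/-- Image of an infinite word under a (non-erasing) morphism, letter by letter. -/
def applyInf (g : AB → List AB) (x : ℕ → AB) : ℕ → AB :=
  fun i => (applyM g ((List.range (i + 1)).map x)).getD i AB.a

/-- `IsProdInf u x` : the infinite word x is the infinite product u 0 · u 1 · u 2 ⋯,
i.e. every finite partial product is a prefix of x. -/
def IsProdInf (u : ℕ → List AB) (x : ℕ → AB) : Prop :=
  ∀ n, PrefInf (((List.range n).map u).flatten) x

/-- Adjoining singular words: `vword d k` is the adjoining singular word v_{k-1}
(so `vword d 0 = v₋₁`), where vₙ = a·sₙ₊₁^{d_{n+2}−1}sₙ·b⁻¹ for n odd and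
vₙ = b·sₙ₊₁^{d_{n+2}−1}sₙ·a⁻¹ for n even. -/
def vword (d : ℕ → ℕ) (k : ℕ) : List AB :=
  (if k % 2 = 0 then AB.a else AB.b) ::
    (lpow (sseq d (k + 1)) (d (k + 1) - 1) ++ sseq d k).dropLast

/-- Singular words: `wword d k` is the singular word w_{k-2}
(w₋₂ = ε, w₋₁ = a, w₀ = b, and wₙ = a·sₙ·b⁻¹ for n ≥ 1 odd, wₙ = b·sₙ·a⁻¹ for n even). -/
def wword (d : ℕ → ℕ) : ℕ → List AB
  | 0 => []
  | 1 => [AB.a]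
  | 2 => [AB.b]
  | k + 3 =>
      (if (k + 1) % 2 = 1 then AB.a else AB.b) :: (sseq d (k + 2)).dropLast

/-- The standard morphism σ associated with a type (i) Sturm number
α = [0;1+d₁,\overline{d₂,…,dₙ}] : σ(a) = sₙ₋₁, σ(b) = sₙ₋₁^{dₙ−d₁} sₙ₋₂. -/
def sigmaGen (d : ℕ → ℕ) (n : ℕ) : AB → List AB
  | AB.a => sseq d n
  | AB.b => lpow (sseq d n) (d n - d 1) ++ sseq d (n - 1)

/-- The directive sequence of α = [0;2,\overline{r}] : d₁ = 1, dᵢ = r for i ≥ 2. -/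
def dseq (r : ℕ) : ℕ → ℕ := fun i => if i ≤ 1 then 1 else r

/-- The directive sequence of 1 − α = [0;1,d₁,\overline{d₂,…,dₙ}] obtained from that of
α = [0;1+d₁,\overline{d₂,…,dₙ}] : ê₁ = 0 and êᵢ = dᵢ₋₁ for i ≥ 2. -/
def dhat (d : ℕ → ℕ) : ℕ → ℕ := fun i => if i ≤ 1 then 0 else d (i - 1)

/-- `Generates ψ c x` : ψ is prolongable on the letter c and x = ψ^ω(c), i.e. every
ψ^m(c) is a prefix of x. -/
def Generates (ψ : AB → List AB) (c : AB) (x : ℕ → AB) : Prop :=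
  (∃ w : List AB, w ≠ [] ∧ ψ c = c :: w) ∧ ∀ m, PrefInf (mpow ψ m c) x

/-- Fibonacci numbers, shifted: `fibw k = F_{k-1}`, so fibw 0 = F₋₁ = 1,
fibw 1 = F₀ = 1, Fₙ = Fₙ₋₁ + Fₙ₋₂. -/
def fibw : ℕ → ℕ
  | 0 => 1
  | 1 => 1
  | n + 2 => fibw (n + 1) + fibw n

/-- `HasCF γ a` : γ has continued fraction expansion [0; a 1, a 2, a 3, …]. -/
def HasCF (γ : ℝ) (a : ℕ → ℕ) : Prop :=
  ∃ x : ℕ → ℝ, x 0 = γ ∧ (∀ i, 0 < x i ∧ x i < 1) ∧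
    ∀ i, 1 / x i = (a (i + 1) : ℝ) + x (i + 1)

/-- γ has a continued fraction expansion of type (i):
γ = [0;1+d₁,\overline{d₂,…,dₙ}] < 1/2 with dₙ ≥ d₁ ≥ 1. -/
def CFTypeI (γ : ℝ) : Prop :=
  ∃ a : ℕ → ℕ, HasCF γ a ∧ γ < 1 / 2 ∧
    ∃ n : ℕ, 2 ≤ n ∧ ∃ d : ℕ → ℕ,
      (∀ i, 1 ≤ i → 1 ≤ d i) ∧ a 1 = 1 + d 1 ∧ (∀ i, 2 ≤ i → a i = d i) ∧
      (∀ i, 2 ≤ i → d (i + (n - 1)) = d i) ∧ d 1 ≤ d n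

/-- γ has a continued fraction expansion of type (ii):
γ = [0;1,d₁,\overline{d₂,…,dₙ}] > 1/2 with dₙ ≥ d₁. -/
def CFTypeII (γ : ℝ) : Prop :=
  ∃ a : ℕ → ℕ, HasCF γ a ∧ 1 / 2 < γ ∧
    ∃ n : ℕ, 2 ≤ n ∧ ∃ d : ℕ → ℕ,
      (∀ i, 1 ≤ i → 1 ≤ d i) ∧ a 1 = 1 ∧ (∀ i, 2 ≤ i → a i = d (i - 1)) ∧
      (∀ i, 2 ≤ i → d (i + (n - 1)) = d i) ∧ d 1 ≤ d n

/-- A Sturm number: an irrational γ ∈ (0,1) whose continued fraction expansion is of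
type (i) or type (ii). -/
def IsSturmNumber (γ : ℝ) : Prop :=
  Irrational γ ∧ 0 < γ ∧ γ < 1 ∧ (CFTypeI γ ∨ CFTypeII γ)

namespace St0
open List

variable {r : ℕ} {c : ℕ → AB}

lemma applyM_nil (g : AB → List AB) : applyM g [] = [] := rfl

lemma applyM_cons (g : AB → List AB) (x : AB) (w : List AB) :
    applyM g (x :: w) = g x ++ applyM g w := by simp [applyM]

lemma applyM_append (g : AB → List AB) (u v : List AB) :
    applyM g (u ++ v) = applyM g u ++ applyM g v := by simp [applyM]

lemma applyM_singleton (g : AB → List AB) (x : AB) : applyM g [x] = g x := by simp [applyM]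

lemma applyM_mpow_zero (g : AB → List AB) (w : List AB) : applyM (mpow g 0) w = w := by
  simp [applyM, mpow]

lemma applyM_compM (g h : AB → List AB) (w : List AB) :
    applyM (compM g h) w = applyM g (applyM h w) := by
  induction w with
  | nil => rfl
  | cons x w ih => simp [applyM_cons, compM, applyM_append, ih]

lemma applyM_mpow_succ (g : AB → List AB) (n : ℕ) (w : List AB) :
    applyM (mpow g (n+1)) w = applyM g (applyM (mpow g n) w) := by
  rw [mpow, applyM_compM]

lemma applyM_mpow_succ' (g : AB → List AB) (n : ℕ) (w : List AB) :
    applyM (mpow g (n+1)) w = applyM (mpow g n) (applyM g w) := by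
  induction n generalizing w with
  | zero => rw [applyM_mpow_succ, applyM_mpow_zero, applyM_mpow_zero]
  | succ n ih => rw [applyM_mpow_succ, ih, ← applyM_mpow_succ]

lemma lpow_length (w : List AB) (k : ℕ) : (lpow w k).length = k * w.length := by
  induction k with
  | zero => simp [lpow]
  | succ k ih => simp [lpow, ih, Nat.succ_mul]; ring

lemma applyM_lpow (g : AB → List AB) (w : List AB) (k : ℕ) :
    applyM g (lpow w k) = lpow (applyM g w) k := by
  induction k with
  | zero => rfl
  | succ k ih => simp [lpow, applyM_append, ih]

lemma lpow_comm (w : List AB) (k : ℕ) : w ++ lpow w k = lpow w k ++ w := by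
  induction k with
  | zero => simp [lpow]
  | succ k ih => rw [lpow, append_assoc, ih, ← append_assoc]

lemma dseq_one : dseq r 1 = 1 := rfl

lemma dseq_two (n : ℕ) : dseq r (n+2) = r := by
  show (if n+2 ≤ 1 then 1 else r) = r
  rw [if_neg (by omega)]

lemma one_le_dseq (hr : 1 ≤ r) (i : ℕ) : 1 ≤ dseq r i := by
  show 1 ≤ if i ≤ 1 then 1 else r
  split <;> omega

lemma sseq_add2 (d : ℕ → ℕ) (n : ℕ) :
    sseq d (n+2) = lpow (sseq d (n+1)) (d (n+1)) ++ sseq d n := rfl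

lemma qseq_add2 (d : ℕ → ℕ) (n : ℕ) :
    qseq d (n+2) = d (n+2) * qseq d (n+1) + qseq d n := rfl

lemma sseq_two : sseq (dseq r) 2 = [AB.a, AB.b] := by
  rw [sseq_add2]
  show lpow [AB.a] 1 ++ [AB.b] = _
  simp [lpow]

lemma sigma_a : sigmaGen (dseq r) 2 AB.a = [AB.a, AB.b] := sseq_two

lemma sigma_b : sigmaGen (dseq r) 2 AB.b = lpow [AB.a, AB.b] (r - 1) ++ [AB.a] := by
  show lpow (sseq (dseq r) 2) (dseq r 2 - dseq r 1) ++ sseq (dseq r) 1 = _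
  rw [sseq_two, dseq_one, dseq_two 0]
  rfl


lemma sigS (hr : 1 ≤ r) : ∀ n,
    applyM (sigmaGen (dseq r) 2) (sseq (dseq r) (n+1)) = sseq (dseq r) (n+2)
  | 0 => by
      show applyM _ [AB.a] = _
      rw [applyM_singleton, sigma_a, sseq_two]
  | 1 => by
      rw [sseq_two, sseq_add2]
      show applyM _ [AB.a, AB.b] = lpow (sseq (dseq r) 2) (dseq r 2) ++ sseq (dseq r) 1
      rw [applyM_cons, applyM_singleton, sigma_a, sigma_b, sseq_two, dseq_two 0]
      show [AB.a, AB.b] ++ (lpow [AB.a, AB.b] (r-1) ++ [AB.a]) = lpow [AB.a, AB.b] r ++ [AB.a]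
      rw [← append_assoc]
      have : [AB.a, AB.b] ++ lpow [AB.a, AB.b] (r-1) = lpow [AB.a, AB.b] ((r-1)+1) := rfl
      rw [this, show r - 1 + 1 = r by omega]
  | (n+2) => by
      rw [sseq_add2 _ (n+1), applyM_append, applyM_lpow, sigS hr (n+1), sigS hr n,
        sseq_add2 _ (n+2), dseq_two (n+1), dseq_two n]

lemma mpowS (hr : 1 ≤ r) (M : ℕ) : ∀ n,
    applyM (mpow (sigmaGen (dseq r) 2) M) (sseq (dseq r) (n+1)) = sseq (dseq r) (n+1+M) := by
  induction M with
  | zero => intro n; rw [applyM_mpow_zero]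
  | succ M ih =>
      intro n
      rw [applyM_mpow_succ' _ _ _, sigS hr n]
      have := ih (n+1)
      rw [show n+1+1 = n+2 from rfl] at this
      rw [this, show n+1+1+M = n+1+(M+1) by omega]

lemma A_eq (hr : 1 ≤ r) (M : ℕ) :
    applyM (mpow (sigmaGen (dseq r) 2) M) [AB.a] = sseq (dseq r) (M+1) := by
  have := mpowS hr M 0
  rw [show sseq (dseq r) 1 = [AB.a] from rfl] at this
  rw [this, Nat.add_comm]

lemma AB_split (κ : ℕ) :
    applyM (mpow (sigmaGen (dseq r) 2) (κ+1)) [AB.a] =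
      applyM (mpow (sigmaGen (dseq r) 2) κ) [AB.a] ++ applyM (mpow (sigmaGen (dseq r) 2) κ) [AB.b] := by
  rw [applyM_mpow_succ', applyM_singleton, sigma_a,
    show [AB.a, AB.b] = [AB.a] ++ [AB.b] from rfl, applyM_append]

lemma Bform (hr : 1 ≤ r) : ∀ κ,
    applyM (mpow (sigmaGen (dseq r) 2) κ) [AB.b] =
      lpow (sseq (dseq r) (κ+1)) (dseq r (κ+1) - 1) ++ sseq (dseq r) κ
  | 0 => by
      rw [applyM_mpow_zero, dseq_one]
      rfl
  | 1 => by
      rw [applyM_mpow_succ, applyM_mpow_zero, applyM_singleton, sigma_b, dseq_two 0, ← sseq_two]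
      rfl
  | (κ+2) => by
      rw [applyM_mpow_succ, Bform hr (κ+1), applyM_append, applyM_lpow, sigS hr (κ+1),
        sigS hr κ, dseq_two κ, dseq_two (κ+1)]

def par (κ : ℕ) : AB := if κ % 2 = 0 then AB.a else AB.b

lemma par_two (κ : ℕ) : par (κ+2) = par κ := by simp [par, Nat.add_mod]

lemma parAB (hr : 1 ≤ r) : ∀ κ,
    (∃ w, applyM (mpow (sigmaGen (dseq r) 2) κ) [AB.a] = w ++ [par κ]) ∧
    (∃ w, applyM (mpow (sigmaGen (dseq r) 2) κ) [AB.b] = w ++ [par (κ+1)]) := by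
  intro κ
  induction κ with
  | zero => exact ⟨⟨[], rfl⟩, ⟨[], rfl⟩⟩
  | succ κ ih =>
      obtain ⟨⟨wa, ha⟩, ⟨wb, hb⟩⟩ := ih
      constructor
      · exact ⟨applyM (mpow (sigmaGen (dseq r) 2) κ) [AB.a] ++ wb, by
          rw [AB_split, hb, ← append_assoc]⟩
      · refine ⟨applyM (mpow (sigmaGen (dseq r) 2) κ) (lpow [AB.a, AB.b] (r-1)) ++ wa, ?_⟩
        rw [applyM_mpow_succ', applyM_singleton, sigma_b, applyM_append, ha, par_two,
          ← append_assoc]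

lemma lpow_pos (w : List AB) {k : ℕ} (hk : 1 ≤ k) : lpow w k = w ++ lpow w (k-1) := by
  cases k with
  | zero => omega
  | succ k => rfl

lemma len_sseq : ∀ n, (sseq (dseq r) (n+1)).length = qseq (dseq r) n
  | 0 => rfl
  | 1 => by rw [sseq_two]; rfl
  | (n+2) => by
      rw [sseq_add2 _ (n+1), length_append, lpow_length, len_sseq (n+1), len_sseq n,
        qseq_add2]

lemma q_pos : ∀ n, 1 ≤ qseq (dseq r) n
  | 0 => le_refl 1
  | 1 => Nat.le_add_right 1 _
  | (n+2) => by
      have := q_pos n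
      rw [qseq_add2]; omega

lemma q_mono (hr : 1 ≤ r) : ∀ n, qseq (dseq r) n ≤ qseq (dseq r) (n+1)
  | 0 => Nat.le_add_right 1 _
  | (n+1) => by
      rw [qseq_add2]
      have h1 : 1 ≤ dseq r (n+2) := one_le_dseq hr _
      have h3 := q_pos (r := r) (n+1)
      nlinarith

lemma q_le_add (hr : 1 ≤ r) (n t : ℕ) : qseq (dseq r) n ≤ qseq (dseq r) (n+t) := by
  induction t with
  | zero => exact le_refl _
  | succ t ih => exact ih.trans (by rw [show n+(t+1) = (n+t)+1 by omega]; exact q_mono hr _)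

lemma q_ge (hr : 1 ≤ r) : ∀ n, n + 1 ≤ qseq (dseq r) n
  | 0 => le_refl 1
  | 1 => by show 2 ≤ 1 + dseq r 1; rw [dseq_one]
  | (n+2) => by
      have h1 := q_ge hr (n+1)
      have h2 := q_pos (r := r) n
      have h3 : 1 ≤ dseq r (n+2) := one_le_dseq hr _
      have h4 := q_pos (r := r) (n+1)
      rw [qseq_add2]
      nlinarith

lemma PrefInf_mono {u w : List AB} (h : u <+: w) (hw : PrefInf w c) : PrefInf u c := by
  obtain ⟨t, rfl⟩ := h
  intro i hi
  rw [← getD_append u t AB.a i hi]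
  exact hw i (by rw [length_append]; omega)

lemma prefS (hr : 1 ≤ r) : ∀ n, sseq (dseq r) (n+1) <+: sseq (dseq r) (n+2)
  | 0 => by rw [sseq_two]; exact ⟨[AB.b], rfl⟩
  | (n+1) => by
      rw [sseq_add2 _ (n+1), dseq_two n, lpow_pos _ hr, append_assoc]
      exact ⟨lpow (sseq (dseq r) (n+2)) (r-1) ++ sseq (dseq r) (n+1), rfl⟩

lemma SS (hr : 1 ≤ r) (hc : ∀ k, PrefInf (sseq (dseq r) (k + 1)) c) (n : ℕ) :
    PrefInf (sseq (dseq r) (n+2) ++ sseq (dseq r) (n+1)) c := by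
  apply PrefInf_mono _ (hc (n+2))
  rw [sseq_add2 _ (n+1), dseq_two n, lpow_pos _ hr, append_assoc]
  have : sseq (dseq r) (n+1) <+: lpow (sseq (dseq r) (n+2)) (r-1) ++ sseq (dseq r) (n+1) := by
    cases h : r - 1 with
    | zero => rw [lpow]; exact ⟨[], by simp⟩
    | succ e =>
        rw [lpow]
        exact (prefS hr n).trans ((prefix_append _ _).trans (by rw [append_assoc]))
  obtain ⟨t, ht⟩ := this
  exact ⟨t, by rw [append_assoc, ht]⟩

lemma swapL (hr : 1 ≤ r) : ∀ n, ∃ w x y,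
    sseq (dseq r) (n+1) ++ sseq (dseq r) n = w ++ [x, y] ∧
    sseq (dseq r) n ++ sseq (dseq r) (n+1) = w ++ [y, x]
  | 0 => ⟨[], AB.a, AB.b, rfl, rfl⟩
  | (n+1) => by
      obtain ⟨w, x, y, h1, h2⟩ := swapL hr n
      refine ⟨lpow (sseq (dseq r) (n+1)) (dseq r (n+1)) ++ w, y, x, ?_, ?_⟩
      · rw [sseq_add2, append_assoc, h2, ← append_assoc]
      · rw [sseq_add2, ← append_assoc, lpow_comm, append_assoc, h1, ← append_assoc]

lemma star (hr : 1 ≤ r) (hc : ∀ k, PrefInf (sseq (dseq r) (k + 1)) c) (n j : ℕ)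
    (hj : j + 3 ≤ qseq (dseq r) (n+1)) : c (qseq (dseq r) n + j) = c j := by
  obtain ⟨w, x, y, h1, h2⟩ := swapL hr (n+1)
  have hlw : w.length + 2 = qseq (dseq r) (n+1) + qseq (dseq r) n := by
    have := congrArg List.length h1
    rw [length_append, length_append] at this
    rw [show n+1+1 = n+2 from rfl, len_sseq (n+1), len_sseq n] at this
    simp at this
    omega
  have hSS := SS hr hc n
  have hqn := q_pos (r := r) n
  have e1 : c (qseq (dseq r) n + j) = (sseq (dseq r) (n+2) ++ sseq (dseq r) (n+1)).getD
      (qseq (dseq r) n + j) AB.a := by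
    refine (hSS _ ?_).symm
    rw [length_append, len_sseq, len_sseq]; omega
  rw [e1]
  rw [show (n:ℕ)+2 = n+1+1 from rfl, h1, getD_append _ _ _ _ (by omega),
    ← getD_append w [y,x] AB.a _ (by omega), ← h2,
    getD_append_right _ _ _ _ (by rw [len_sseq]; omega), len_sseq]
  have heq : qseq (dseq r) n + j - qseq (dseq r) n = j := by omega
  rw [heq]
  exact hc (n+1) j (by rw [show (n:ℕ)+1+1 = n+2 from rfl, len_sseq]; omega)

lemma getD_cpre (n i : ℕ) (h : i < n) : ((List.range n).map c).getD i AB.a = c i := by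
  rw [getD_eq_getElem _ _ (by simpa using h)]
  simp

lemma take_pref {w : List AB} (hw : PrefInf w c) (n : ℕ) (hn : n ≤ w.length) :
    w.take n = (List.range n).map c := by
  apply List.ext_getElem
  · simp; omega
  · intro i h1 h2
    have h3 : i < w.length := by simp at h1; omega
    simp only [List.getElem_take, List.getElem_map, List.getElem_range]
    rw [← getD_eq_getElem w AB.a h3, hw i h3]

lemma eq_cpre {u : List AB} (hu : PrefInf u c) : u = (List.range u.length).map c := by
  apply List.ext_getElem
  · simp
  · intro i h1 h2
    rw [← getD_eq_getElem u AB.a h1, hu i h1]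
    simp

lemma one_le_len_sig (x : AB) : 1 ≤ (sigmaGen (dseq r) 2 x).length := by
  cases x
  · rw [sigma_a]; simp
  · rw [sigma_b]; simp

lemma applyM_len_ge (g : AB → List AB) (hg : ∀ x, 1 ≤ (g x).length) (w : List AB) :
    w.length ≤ (applyM g w).length := by
  induction w with
  | nil => simp [applyM_nil]
  | cons x w ih =>
      rw [applyM_cons, length_append]
      have := hg x
      simp only [length_cons]
      omega

lemma mpow_len (M : ℕ) (x : AB) : 1 ≤ (mpow (sigmaGen (dseq r) 2) M x).length := by
  induction M with
  | zero => simp [mpow]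
  | succ M ih =>
      show 1 ≤ (compM (sigmaGen (dseq r) 2) (mpow (sigmaGen (dseq r) 2) M) x).length
      unfold compM
      calc 1 ≤ (mpow (sigmaGen (dseq r) 2) M x).length := ih
        _ ≤ _ := applyM_len_ge _ one_le_len_sig _

lemma master (hr : 1 ≤ r) (hc : ∀ k, PrefInf (sseq (dseq r) (k + 1)) c) {M : ℕ}
    {ξ : AB → List AB} {u : List AB}
    (hconj : ∀ w, applyM (mpow (sigmaGen (dseq r) 2) M) w ++ u = u ++ applyM ξ w) (n : ℕ) :
    PrefInf (applyM (mpow (sigmaGen (dseq r) 2) M) ((List.range n).map c) ++ u) c := by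
  have hlen : (sseq (dseq r) (n + u.length + 1)).length = qseq (dseq r) (n + u.length) :=
    len_sseq _
  have hqN := q_ge hr (n + u.length)
  have hn_le : n ≤ (sseq (dseq r) (n + u.length + 1)).length := by omega
  have htake := take_pref (hc (n + u.length)) n hn_le
  have hsplit : (List.range n).map c ++ (sseq (dseq r) (n + u.length + 1)).drop n
      = sseq (dseq r) (n + u.length + 1) := by
    rw [← htake, take_append_drop]
  set z := (sseq (dseq r) (n + u.length + 1)).drop n with hz
  have hzlen : u.length ≤ (applyM (mpow (sigmaGen (dseq r) 2) M) z).length := by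
    have h1 : z.length = qseq (dseq r) (n + u.length) - n := by rw [hz, length_drop, hlen]
    have h2 := applyM_len_ge (mpow (sigmaGen (dseq r) 2) M) (mpow_len M) z
    omega
  have hu_take : u = (applyM (mpow (sigmaGen (dseq r) 2) M) z).take u.length := by
    have h2 : (applyM (mpow (sigmaGen (dseq r) 2) M) z ++ u).take u.length
        = (u ++ applyM ξ z).take u.length := by rw [hconj z]
    rw [take_append_of_le_length hzlen, take_append_of_le_length (le_refl _),
      take_length] at h2
    exact h2.symm
  have hpref : applyM (mpow (sigmaGen (dseq r) 2) M) ((List.range n).map c) ++ u <+: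
      sseq (dseq r) (n + u.length + 1 + M) := by
    rw [← mpowS hr M (n + u.length), ← hsplit, applyM_append]
    refine ⟨(applyM (mpow (sigmaGen (dseq r) 2) M) z).drop u.length, ?_⟩
    rw [append_assoc]
    congr 1
    nth_rewrite 1 [hu_take]
    exact take_append_drop _ _
  have hC := hc (n + u.length + M)
  rw [show n + u.length + M + 1 = n + u.length + 1 + M by omega] at hC
  exact PrefInf_mono hpref hC

lemma witness_eq (hr : 1 ≤ r) (hc : ∀ k, PrefInf (sseq (dseq r) (k + 1)) c) {M : ℕ}
    {ξ : AB → List AB} {u : List AB}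
    (hconj : ∀ w, applyM (mpow (sigmaGen (dseq r) 2) M) w ++ u = u ++ applyM ξ w) :
    u = (List.range u.length).map c := by
  have h0 := master hr hc hconj 0
  simp only [List.range_zero, List.map_nil, applyM_nil, List.nil_append] at h0
  exact eq_cpre h0

lemma applyInf_shift (hr : 1 ≤ r) (hc : ∀ k, PrefInf (sseq (dseq r) (k + 1)) c) {M : ℕ}
    {ξ : AB → List AB} {u : List AB}
    (hconj : ∀ w, applyM (mpow (sigmaGen (dseq r) 2) M) w ++ u = u ++ applyM ξ w) (i : ℕ) :
    (applyM ξ ((List.range (i+1)).map c)).getD i AB.a = c (u.length + i) := by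
  have hM := master hr hc hconj (i+1)
  have hwlen : ((List.range (i+1)).map c).length = i + 1 := by simp
  have hlen : i + 1 ≤ (applyM (mpow (sigmaGen (dseq r) 2) M) ((List.range (i+1)).map c)).length := by
    have := applyM_len_ge (mpow (sigmaGen (dseq r) 2) M) (mpow_len M) ((List.range (i+1)).map c)
    omega
  have e1 : (applyM ξ ((List.range (i+1)).map c)).getD i AB.a
      = (u ++ applyM ξ ((List.range (i+1)).map c)).getD (u.length + i) AB.a := by
    rw [getD_append_right _ _ _ _ (by omega), show u.length + i - u.length = i by omega]
  rw [e1, ← hconj ((List.range (i+1)).map c)]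
  exact hM (u.length + i) (by rw [length_append]; omega)

lemma getD_drop (l : List AB) (j i : ℕ) (h : j + i < l.length) :
    (l.drop j).getD i AB.a = l.getD (j+i) AB.a := by
  rw [getD_eq_getElem _ _ (by rw [length_drop]; omega), getD_eq_getElem _ _ h]
  simp

lemma vword_eq (hr : 1 ≤ r) (κ : ℕ) :
    vword (dseq r) κ = par κ :: (applyM (mpow (sigmaGen (dseq r) 2) κ) [AB.b]).dropLast := by
  rw [Bform hr κ]
  rfl

lemma Vclaim (hr : 1 ≤ r) (m : ℕ) : ∀ n,
    ((List.range n).map (fun t => vword (dseq r) (m+t))).flatten ++ [par (m+n)]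
      = (sseq (dseq r) (m+n+1)).drop (qseq (dseq r) m - 1) := by
  intro n
  induction n with
  | zero =>
      obtain ⟨⟨w, hw⟩, -⟩ := parAB hr m
      rw [A_eq hr m] at hw
      have hlw : w.length = qseq (dseq r) m - 1 := by
        have := congrArg List.length hw
        rw [len_sseq, length_append] at this
        have := q_pos (r := r) m
        simp at *
        omega
      simp only [List.range_zero, List.map_nil, List.flatten_nil, List.nil_append,
        Nat.add_zero]
      rw [hw, ← hlw, drop_left]
  | succ n ih =>
      obtain ⟨-, ⟨w, hw⟩⟩ := parAB hr (m+n)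
      have hq1 : qseq (dseq r) m - 1 ≤ qseq (dseq r) (m+n) := by
        have := q_le_add hr m n
        have := q_pos (r := r) m
        omega
      rw [show m+(n+1)+1 = (m+n+1)+1 by omega, ← A_eq hr (m+n+1), AB_split,
        drop_append_of_le_length (by rw [A_eq hr (m+n), len_sseq]; exact hq1),
        A_eq hr (m+n), ← ih]
      rw [List.range_succ, map_append, flatten_append]
      simp only [List.map_cons, List.map_nil, List.flatten_cons, List.flatten_nil,
        List.append_nil]
      rw [vword_eq hr (m+n), hw, show m+(n+1) = (m+n)+1 by omega]
      rw [List.dropLast_concat]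
      simp

lemma Aprod (hr : 1 ≤ r) (m : ℕ) : ∀ n,
    sseq (dseq r) (m+n+1) = sseq (dseq r) (m+1) ++
      ((List.range n).map (fun t => applyM (mpow (sigmaGen (dseq r) 2) (m+t)) [AB.b])).flatten
  | 0 => by simp
  | (n+1) => by
      rw [show m+(n+1)+1 = (m+n+1)+1 by omega, ← A_eq hr (m+n+1), AB_split, A_eq hr (m+n),
        Aprod hr m n, List.range_succ, map_append, flatten_append]
      simp only [List.map_cons, List.map_nil, List.flatten_cons, List.flatten_nil,
        List.append_nil, List.append_assoc]

lemma prodP {m k' : ℕ} {ξs : ℕ → AB → List AB}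
    (hP : ∀ t w, applyM (mpow (sigmaGen (dseq r) 2) (m+t)) w ++ (List.range k').map c
      = (List.range k').map c ++ applyM (ξs t) w) : ∀ n,
    (List.range k').map c ++ ((List.range n).map (fun t => applyM (ξs t) [AB.b])).flatten
      = ((List.range n).map (fun t => applyM (mpow (sigmaGen (dseq r) 2) (m+t)) [AB.b])).flatten
        ++ (List.range k').map c := by
  intro n
  induction n with
  | zero => simp
  | succ n ih =>
      rw [List.range_succ, map_append, flatten_append, map_append, flatten_append]
      simp only [List.map_cons, List.map_nil, List.flatten_cons, List.flatten_nil,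
        List.append_nil]
      rw [← append_assoc, ih, append_assoc, ← hP n [AB.b], ← append_assoc]

end St0


/-- For α = [0;2,\overline{r}] (r ≥ 1) with σ(a) = s₁, σ(b) = s₁^{r−1}s₀
generating c_α: if k = q_{m+1} − p with 2 ≤ p ≤ q_{m+1} − q_m + 1, then
(σ^m)_k(c_α) = ∏_{j=m−1}^∞ (σ^{j+1})_{q_{m+1}−q_m−p}(b), where (σ^{j+1})_{−1}(b) := v_j.
(Term t of the product corresponds to j = m − 1 + t, and v_j = `vword (dseq r) (m+t)`.) -/
theorem statement0 (r : ℕ) (hr : 1 ≤ r)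
    (c : ℕ → AB) (hc : ∀ k, PrefInf (sseq (dseq r) (k + 1)) c)
    (k m p : ℕ) (hp2 : 2 ≤ p)
    (hp : p ≤ qseq (dseq r) (m + 1) - qseq (dseq r) m + 1)
    (hk : k = qseq (dseq r) (m + 1) - p)
    (ξ : AB → List AB) (hξ : IsRightConj (mpow (sigmaGen (dseq r) 2) m) ξ k)
    (ξs : ℕ → AB → List AB)
    (hξs : p ≤ qseq (dseq r) (m + 1) - qseq (dseq r) m →
      ∀ t, IsRightConj (mpow (sigmaGen (dseq r) 2) (m + t)) (ξs t)
        (qseq (dseq r) (m + 1) - qseq (dseq r) m - p)) :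
    IsProdInf
      (fun t =>
        if p = qseq (dseq r) (m + 1) - qseq (dseq r) m + 1 then
          vword (dseq r) (m + t)
        else applyM (ξs t) [AB.b])
      (applyInf ξ c) := by
  obtain ⟨u, hu, hconj⟩ := hξ
  intro n i hi
  have hqm : qseq (dseq r) m ≤ qseq (dseq r) (m+1) := St0.q_mono hr m
  have hq1 : 1 ≤ qseq (dseq r) m := St0.q_pos (r := r) m
  have hshift : applyInf ξ c i = c (k + i) := by
    have h2 := St0.applyInf_shift hr hc hconj i
    rw [hu] at h2
    exact h2
  rw [hshift]
  by_cases hcase : p = qseq (dseq r) (m + 1) - qseq (dseq r) m + 1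
  · -- singular case
    simp only [if_pos hcase] at hi ⊢
    have hkq : k = qseq (dseq r) m - 1 := by omega
    have hV := St0.Vclaim hr m n
    have hlenV := congrArg List.length hV
    rw [List.length_append, List.length_drop, St0.len_sseq] at hlenV
    simp only [List.length_cons, List.length_nil] at hlenV
    have hmn : qseq (dseq r) m ≤ qseq (dseq r) (m+n) := St0.q_le_add hr m n
    have hb : qseq (dseq r) m - 1 + i < qseq (dseq r) (m+n) := by omega
    rw [← List.getD_append _ [St0.par (m+n)] AB.a i hi, hV,
      St0.getD_drop _ _ _ (by rw [St0.len_sseq]; omega),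
      show qseq (dseq r) m - 1 + i = k + i by omega]
    exact hc (m+n) (k+i) (by rw [St0.len_sseq]; omega)
  · -- generic case
    have hple : p ≤ qseq (dseq r) (m+1) - qseq (dseq r) m := by omega
    simp only [if_neg hcase] at hi ⊢
    have hP : ∀ t w, applyM (mpow (sigmaGen (dseq r) 2) (m+t)) w
        ++ (List.range (qseq (dseq r) (m+1) - qseq (dseq r) m - p)).map c
        = (List.range (qseq (dseq r) (m+1) - qseq (dseq r) m - p)).map c
          ++ applyM (ξs t) w := by
      intro t w
      obtain ⟨ut, hl, hcj⟩ := hξs hple t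
      have he := St0.witness_eq hr hc hcj
      rw [hl] at he
      rw [← he]
      exact hcj w
    have hprod := St0.prodP hP n
    have hA := St0.Aprod hr m n
    set k' := qseq (dseq r) (m+1) - qseq (dseq r) m - p with hk'
    set F := ((List.range n).map
      (fun t => applyM (mpow (sigmaGen (dseq r) 2) (m+t)) [AB.b])).flatten with hF
    set PT := ((List.range n).map (fun t => applyM (ξs t) [AB.b])).flatten with hPT
    have hlen1 : ((List.range k').map c).length = k' := by simp
    have hlenEq : PT.length = F.length := by
      have h3 := congrArg List.length hprod
      simp only [List.length_append] at h3
      omega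
    have hlenF : qseq (dseq r) m + F.length = qseq (dseq r) (m+n) := by
      have h3 := congrArg List.length hA
      rw [St0.len_sseq, List.length_append, St0.len_sseq] at h3
      omega
    have hkk : k = qseq (dseq r) m + k' := by omega
    have e1 : PT.getD i AB.a = ((List.range k').map c ++ PT).getD (k' + i) AB.a := by
      rw [List.getD_append_right _ _ _ _ (by rw [hlen1]; omega), hlen1,
        show k' + i - k' = i by omega]
    rw [e1, hprod]
    by_cases hin : k' + i < F.length
    · rw [List.getD_append _ _ _ _ hin]
      have e2 : F.getD (k'+i) AB.a
          = (sseq (dseq r) (m+1) ++ F).getD (qseq (dseq r) m + (k'+i)) AB.a := by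
        rw [List.getD_append_right _ _ _ _ (by rw [St0.len_sseq]; omega), St0.len_sseq,
          show qseq (dseq r) m + (k'+i) - qseq (dseq r) m = k'+i by omega]
      rw [e2, ← hA, show qseq (dseq r) m + (k'+i) = k + i by omega]
      exact hc (m+n) (k+i) (by rw [St0.len_sseq]; omega)
    · have hout : F.length ≤ k' + i := by omega
      rw [List.getD_append_right _ _ _ _ (by omega),
        St0.getD_cpre _ _ (by omega)]
      have hq2 : qseq (dseq r) (m+1) ≤ qseq (dseq r) (m+n+1) := by
        have h3 := St0.q_le_add hr (m+1) n
        rwa [show m+1+n = m+n+1 by omega] at h3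
      have hstar := St0.star hr hc (m+n) (k'+i-F.length) (by omega)
      rw [← hstar, show qseq (dseq r) (m+n) + (k'+i-F.length) = k + i by omega]
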